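/- Let Σ = {q, p} and define δ : Σ×Σ → ℂ^Σ by δ(q,q) = |q⟩, δ(q,p) = (1/2)|q⟩, δ(p,q) = 2|p⟩, δ(p,p) = |p⟩, where |x⟩ denotes the indicator vector of x. For finitely supported configurations c, d : ℤ → Σ (equal to q outside a finite set), define U(d,c) = ∏_{i∈ℤ} δ(c_i, c_{i+1})(d_i). Then U(d,c) = 1 if c = d and U(d,c) = 0 otherwise; i.e., the time evolution operator is the identity. -/

import Mathlib

open scoped Classical

/-- The example LQCA `B` over `Σ = {q, p}` (here `q = false`, `p = true`) with
neighborhood `(0,1)` and local rule `δ(q,q) = |q⟩`, `δ(q,p) = ½|q⟩`,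
`δ(p,q) = 2|p⟩`, `δ(p,p) = |p⟩` has time evolution operator equal to the
identity: `U(d,c) = 1` if `c = d` and `0` otherwise. -/
theorem example_lqca_identity
    (δ : Bool × Bool → Bool → ℂ)
    (hqq : δ (false, false) = fun x => if x = false then 1 else 0)
    (hqp : δ (false, true) = fun x => if x = false then 1/2 else 0)
    (hpq : δ (true, false) = fun x => if x = true then 2 else 0)
    (hpp : δ (true, true) = fun x => if x = true then 1 else 0)
    (c d : ℤ → Bool)
    (hc : {i | c i ≠ false}.Finite) (hd : {i | d i ≠ false}.Finite) :
    (∏ᶠ i : ℤ, δ (c i, c (i + 1)) (d i)) = if c = d then 1 else 0 := by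
  have hc1 : {i : ℤ | c (i + 1) ≠ false}.Finite := by
    have := hc.preimage (f := fun i : ℤ => i + 1) ((add_left_injective 1).injOn)
    exact this
  by_cases hcd : c = d
  · subst hcd
    rw [if_pos rfl]
    set n : ℤ → ℤ := fun i => if c i = true then 1 else 0 with hn
    set m : ℤ → ℤ := fun i => n i - n (i + 1) with hm
    have hf : ∀ i, δ (c i, c (i + 1)) (c i) = (2 : ℂ) ^ (m i) := by
      intro i
      cases h1 : c i <;> cases h2 : c (i + 1) <;>
        simp [hqq, hqp, hpq, hpp, hm, hn, h1, h2]
    have hmsup : Function.support m ⊆ {i | c i ≠ false} ∪ {i | c (i + 1) ≠ false} := by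
      intro i hi
      by_contra h
      simp only [Set.mem_union, Set.mem_setOf_eq, not_or, not_not] at h
      apply hi
      simp [hm, hn, h.1, h.2]
    have hmfin : (Function.support m).Finite := (hc.union hc1).subset hmsup
    have hsum : ∑ᶠ i, m i = 0 := by
      have h1fin : (Function.support fun i : ℤ => n (i + 1)).Finite := by
        apply hc1.subset
        intro i hi
        simp only [Function.mem_support, hn] at hi
        simp only [Set.mem_setOf_eq]
        intro h; rw [h] at hi; simp at hi
      have h0fin : (Function.support n).Finite := by
        apply hc.subset
        intro i hi
        simp only [Function.mem_support, hn] at hi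
        intro h; rw [h] at hi; simp at hi
      rw [hm]
      rw [finsum_sub_distrib h0fin h1fin]
      have : (∑ᶠ i : ℤ, n (i + 1)) = ∑ᶠ i, n i :=
        finsum_comp_equiv (Equiv.addRight (1 : ℤ))
      rw [this, sub_self]
    calc (∏ᶠ i : ℤ, δ (c i, c (i + 1)) (c i)) = ∏ᶠ i, (2 : ℂ) ^ (m i) := by
          exact finprod_congr hf
      _ = ∏ i ∈ hmfin.toFinset, (2 : ℂ) ^ (m i) := by
          apply finprod_eq_prod_of_mulSupport_subset
          intro i hi
          have h : m i ≠ 0 := fun h0 => hi (by show (2 : ℂ) ^ (m i) = 1; rw [h0, zpow_zero])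
          exact Finset.mem_coe.mpr (hmfin.mem_toFinset.mpr h)
      _ = (2 : ℂ) ^ (∑ i ∈ hmfin.toFinset, m i) := by
          induction hmfin.toFinset using Finset.induction with
          | empty => simp
          | insert _ _ hx ih =>
            rw [Finset.prod_insert hx, Finset.sum_insert hx, ih,
              zpow_add₀ (two_ne_zero)]
      _ = 1 := by
          rw [← finsum_eq_sum_of_support_subset m (by simp [hmfin]), hsum, zpow_zero]
  · rw [if_neg hcd]
    have hδ0 : ∀ a b x, x ≠ a → δ (a, b) x = 0 := by
      intro a b x h
      cases a <;> cases b <;> cases x <;>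
        simp_all [hqq, hqp, hpq, hpp]
    obtain ⟨j, hj⟩ := Function.ne_iff.mp hcd
    have hfin : (Function.mulSupport fun i => δ (c i, c (i + 1)) (d i)).Finite := by
      apply ((hc.union hc1).union hd).subset
      intro i hi
      by_contra h
      simp only [Set.mem_union, Set.mem_setOf_eq, not_or, not_not] at h
      apply hi
      simp [Function.mulSupport, hqq, h.1.1, h.1.2, h.2]
    rw [finprod_eq_prod _ hfin]
    by_cases hjmem : j ∈ hfin.toFinset
    · exact Finset.prod_eq_zero hjmem (hδ0 _ _ _ (Ne.symm hj))
    · exfalso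
      apply hjmem
      simp only [Set.Finite.mem_toFinset, Function.mem_mulSupport]
      rw [hδ0 _ _ _ (Ne.symm hj)]
      exact zero_ne_one
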